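/- Let (x_k), (y_k) be a DCA sequence for f = g − h. If g is γ₁-convex and h is γ₂-convex (γ₁, γ₂ ≥ 0), then for every k ≥ 1, f(x_k) − f(x_{k+1}) ≥ ((γ₁ + γ₂)/2)·‖x_{k+1} − x_k‖². -/

import Mathlib

open scoped RealInnerProductSpace

lemma strong_subgrad {n : ℕ} (ψ : EuclideanSpace ℝ (Fin n) → ℝ) (γ : ℝ)
    (hc : ConvexOn ℝ Set.univ fun z : EuclideanSpace ℝ (Fin n) => ψ z - γ / 2 * ‖z‖ ^ 2)
    (x v : EuclideanSpace ℝ (Fin n)) (hs : ∀ z, ψ x + ⟪v, z - x⟫ ≤ ψ z)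
    (z : EuclideanSpace ℝ (Fin n)) :
    ψ x + ⟪v, z - x⟫ + γ / 2 * ‖z - x‖ ^ 2 ≤ ψ z := by
  have key : ∀ t : ℝ, t ∈ Set.Ioo (0:ℝ) 1 →
      ψ x + ⟪v, z - x⟫ + γ / 2 * (1 - t) * ‖z - x‖ ^ 2 ≤ ψ z := by
    intro t ht
    obtain ⟨ht0, ht1⟩ := ht
    have hcv := hc.2 (Set.mem_univ x) (Set.mem_univ z) (by linarith : (0:ℝ) ≤ 1 - t)
      (le_of_lt ht0) (by ring)
    have hsub := hs ((1 - t) • x + t • z)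
    have hinner : ⟪v, ((1 - t) • x + t • z) - x⟫ = t * ⟪v, z - x⟫ := by
      have : ((1 - t) • x + t • z) - x = t • (z - x) := by
        module
      rw [this, real_inner_smul_right]
    -- norm identities
    have hA : ‖z - x‖ ^ 2 = ‖z‖ ^ 2 - 2 * ⟪z, x⟫ + ‖x‖ ^ 2 := norm_sub_sq_real z x
    have hB : ‖(1 - t) • x + t • z‖ ^ 2
        = (1 - t) ^ 2 * ‖x‖ ^ 2 + 2 * ((1 - t) * t) * ⟪x, z⟫ + t ^ 2 * ‖z‖ ^ 2 := by
      rw [norm_add_sq_real, real_inner_smul_left, real_inner_smul_right, norm_smul,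
        norm_smul, mul_pow, mul_pow, Real.norm_eq_abs, Real.norm_eq_abs, sq_abs, sq_abs]
      ring
    have hC : ⟪z, x⟫ = ⟪x, z⟫ := real_inner_comm x z
    have hkey : ‖(1 - t) • x + t • z‖ ^ 2
        = (1 - t) * ‖x‖ ^ 2 + t * ‖z‖ ^ 2 - t * (1 - t) * ‖z - x‖ ^ 2 := by
      rw [hB, hA, hC]; ring
    simp only [smul_eq_mul] at hcv
    rw [hinner] at hsub
    rw [hkey] at hcv
    have h1 : t * (⟪v, z - x⟫ + γ / 2 * (1 - t) * ‖z - x‖ ^ 2) ≤ t * (ψ z - ψ x) := by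
      nlinarith [hsub, hcv]
    have h2 := (mul_le_mul_iff_right₀ ht0).mp h1
    linarith
  have hlim : Filter.Tendsto (fun m : ℕ =>
      ψ x + ⟪v, z - x⟫ + γ / 2 * (1 - 1 / (m + 2)) * ‖z - x‖ ^ 2) Filter.atTop
      (nhds (ψ x + ⟪v, z - x⟫ + γ / 2 * (1 - 0) * ‖z - x‖ ^ 2)) := by
    apply Filter.Tendsto.add
    apply Filter.Tendsto.add tendsto_const_nhds tendsto_const_nhds
    apply Filter.Tendsto.mul_const
    apply Filter.Tendsto.mul tendsto_const_nhds
    apply Filter.Tendsto.const_sub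
    have : Filter.Tendsto (fun m : ℕ => ((m:ℝ) + 2)) Filter.atTop Filter.atTop := by
      apply Filter.tendsto_atTop_add_const_right
      exact tendsto_natCast_atTop_atTop
    simpa [Pi.inv_def] using this.inv_tendsto_atTop
  have := le_of_tendsto' hlim (fun m => key (1 / (m + 2)) ⟨by positivity, by
    rw [div_lt_one (by positivity)]; linarith [Nat.cast_nonneg (α := ℝ) m]⟩)
  linarith [this]

theorem stmt_2 {n : ℕ} (g h : EuclideanSpace ℝ (Fin n) → ℝ)
    (γ₁ γ₂ : ℝ) (hγ₁ : 0 ≤ γ₁) (hγ₂ : 0 ≤ γ₂)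
    (hg : ConvexOn ℝ Set.univ fun z : EuclideanSpace ℝ (Fin n) => g z - γ₁ / 2 * ‖z‖ ^ 2)
    (hh : ConvexOn ℝ Set.univ fun z : EuclideanSpace ℝ (Fin n) => h z - γ₂ / 2 * ‖z‖ ^ 2)
    (x y : ℕ → EuclideanSpace ℝ (Fin n))
    (hdca : ∀ k : ℕ, 1 ≤ k →
      (∀ z, h (x (k - 1)) + ⟪y k, z - x (k - 1)⟫ ≤ h z) ∧
      (∀ z, g (x k) + ⟪y k, z - x k⟫ ≤ g z))
    (k : ℕ) (hk : 1 ≤ k) :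
    (γ₁ + γ₂) / 2 * ‖x (k + 1) - x k‖ ^ 2
      ≤ (g (x k) - h (x k)) - (g (x (k + 1)) - h (x (k + 1))) := by
  obtain ⟨hy1, hy2⟩ := hdca (k + 1) (by omega)
  simp only [Nat.add_sub_cancel] at hy1
  have H1 := strong_subgrad g γ₁ hg (x (k + 1)) (y (k + 1)) hy2 (x k)
  have H2 := strong_subgrad h γ₂ hh (x k) (y (k + 1)) hy1 (x (k + 1))
  have hn : ‖x k - x (k + 1)‖ = ‖x (k + 1) - x k‖ := norm_sub_rev _ _
  have hi : ⟪y (k + 1), x k - x (k + 1)⟫ = -⟪y (k + 1), x (k + 1) - x k⟫ := by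
    rw [← inner_neg_right, neg_sub]
  rw [hn, hi] at H1
  linarith
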